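/- A Kähler manifold M of real dimension 2m has vanishing Bochner curvature tensor if and only if for each point p of M the sum Σ_{i=1}^m R(e_i, Je_i, Je_i, e_i) is independent of the choice of orthonormal basis {e_i, Je_i : i = 1, ..., m} of T_p M adapted to J. -/

import Mathlib

open scoped RealInnerProductSpace

/-- A compatible (orthogonal) complex structure on a real inner product space. -/
def IsComplexStructure {V : Type*} [NormedAddCommGroup V] [InnerProductSpace ℝ V]
    (J : V →ₗ[ℝ] V) : Prop :=
  (∀ x, J (J x) = -x) ∧ ∀ x y : V, ⟪J x, J y⟫ = ⟪x, y⟫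

/-- A (0,4) curvature-type tensor. -/
abbrev CurvTensor (V : Type*) [NormedAddCommGroup V] [InnerProductSpace ℝ V] :=
  V →ₗ[ℝ] V →ₗ[ℝ] V →ₗ[ℝ] V →ₗ[ℝ] ℝ

/-- An algebraic curvature tensor of Kähler type. -/
structure IsKahlerCurv {V : Type*} [NormedAddCommGroup V] [InnerProductSpace ℝ V]
    (J : V →ₗ[ℝ] V) (R : CurvTensor V) : Prop where
  skew₁ : ∀ x y z u, R x y z u = - R y x z u
  skew₂ : ∀ x y z u, R x y z u = - R x y u z
  symm : ∀ x y z u, R x y z u = R z u x y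
  bianchi : ∀ x y z u, R x y z u + R y z x u + R z x y u = 0
  kahler : ∀ x y z u, R x y z u = R x y (J z) (J u)

/-- The Ricci tensor of an algebraic curvature tensor. -/
noncomputable def ricciT {V : Type*} [NormedAddCommGroup V] [InnerProductSpace ℝ V]
    [FiniteDimensional ℝ V] (R : CurvTensor V) (y z : V) : ℝ :=
  ∑ i, R (stdOrthonormalBasis ℝ V i) y z (stdOrthonormalBasis ℝ V i)

/-- The scalar curvature of an algebraic curvature tensor. -/
noncomputable def scalarT {V : Type*} [NormedAddCommGroup V] [InnerProductSpace ℝ V]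
    [FiniteDimensional ℝ V] (R : CurvTensor V) : ℝ :=
  ∑ i, ricciT R (stdOrthonormalBasis ℝ V i) (stdOrthonormalBasis ℝ V i)

/-- The Bochner curvature tensor of a Kähler-type curvature tensor
(`2 * m` is the dimension). -/
noncomputable def bochnerT {V : Type*} [NormedAddCommGroup V] [InnerProductSpace ℝ V]
    [FiniteDimensional ℝ V] (m : ℕ) (J : V →ₗ[ℝ] V) (R : CurvTensor V)
    (x y z u : V) : ℝ :=
  R x y z u
  - (1 / (2 * ((m : ℝ) + 2))) *
      ( ⟪x, u⟫ * ricciT R y z - ⟪x, z⟫ * ricciT R y u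
      + ⟪y, z⟫ * ricciT R x u - ⟪y, u⟫ * ricciT R x z
      + ⟪x, J u⟫ * ricciT R y (J z) - ⟪x, J z⟫ * ricciT R y (J u)
      + ⟪y, J z⟫ * ricciT R x (J u) - ⟪y, J u⟫ * ricciT R x (J z)
      - 2 * ⟪x, J y⟫ * ricciT R z (J u) - 2 * ⟪z, J u⟫ * ricciT R x (J y) )
  + (scalarT R / (4 * ((m : ℝ) + 1) * ((m : ℝ) + 2))) *
      ( ⟪x, u⟫ * ⟪y, z⟫ - ⟪x, z⟫ * ⟪y, u⟫
      + ⟪x, J u⟫ * ⟪y, J z⟫ - ⟪x, J z⟫ * ⟪y, J u⟫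
      - 2 * ⟪x, J y⟫ * ⟪z, J u⟫ )

/-- `x, Jx, y, Jy, z, Jz` are pairwise orthogonal, i.e. `x, y, z` span an
antiholomorphic 3-plane. -/
def AntiholoTriple {V : Type*} [NormedAddCommGroup V] [InnerProductSpace ℝ V]
    (J : V →ₗ[ℝ] V) (x y z : V) : Prop :=
  ⟪x, y⟫ = 0 ∧ ⟪x, z⟫ = 0 ∧ ⟪y, z⟫ = 0 ∧
  ⟪x, J x⟫ = 0 ∧ ⟪y, J y⟫ = 0 ∧ ⟪z, J z⟫ = 0 ∧
  ⟪x, J y⟫ = 0 ∧ ⟪x, J z⟫ = 0 ∧ ⟪y, J z⟫ = 0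

/-- A `J`-adapted orthonormal family `{e i, J (e i)}`. -/
def IsAdaptedBasis {V : Type*} [NormedAddCommGroup V] [InnerProductSpace ℝ V]
    (J : V →ₗ[ℝ] V) {m : ℕ} (e : Fin m → V) : Prop :=
  (∀ i j, ⟪e i, e j⟫ = if i = j then 1 else 0) ∧ ∀ i j, ⟪e i, J (e j)⟫ = 0


set_option linter.unusedSectionVars false
set_option maxHeartbeats 1000000

namespace BochnerProof

section InstFix
variable {V : Type*} [NormedAddCommGroup V] [InnerProductSpace ℝ V]

instance acg3 : AddCommGroup (V →ₗ[ℝ] V →ₗ[ℝ] V →ₗ[ℝ] ℝ) :=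
  @LinearMap.addCommGroup ℝ ℝ V (V →ₗ[ℝ] V →ₗ[ℝ] ℝ) _ _ _ LinearMap.addCommGroup _ _ _

instance acg4 : AddCommGroup (V →ₗ[ℝ] V →ₗ[ℝ] V →ₗ[ℝ] V →ₗ[ℝ] ℝ) :=
  @LinearMap.addCommGroup ℝ ℝ V (V →ₗ[ℝ] V →ₗ[ℝ] V →ₗ[ℝ] ℝ) _ _ _ acg3 _ _ _

@[simp] lemma sub_apply3 (f g : V →ₗ[ℝ] V →ₗ[ℝ] V →ₗ[ℝ] ℝ) (z : V) : (f - g) z = f z - g z := rfl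

@[simp] lemma neg_apply3 (f : V →ₗ[ℝ] V →ₗ[ℝ] V →ₗ[ℝ] ℝ) (z : V) : (-f) z = -f z := rfl

end InstFix

section Aux
variable {V : Type*} [NormedAddCommGroup V] [InnerProductSpace ℝ V]
variable {J : V →ₗ[ℝ] V}

lemma ics_JJ (hJ : IsComplexStructure J) (x : V) : J (J x) = -x := hJ.1 x

lemma ics_inner_J_left (hJ : IsComplexStructure J) (x y : V) : ⟪J x, y⟫ = - ⟪x, J y⟫ := by
  have := hJ.2 (J x) y
  rw [hJ.1 x] at this
  rw [← this, inner_neg_left]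

lemma ics_inner_J_self (hJ : IsComplexStructure J) (x : V) : ⟪x, J x⟫ = 0 := by
  have h := ics_inner_J_left hJ x x
  have h2 : ⟪x, J x⟫ = ⟪J x, x⟫ := real_inner_comm _ _
  linarith [h, h2]

lemma ics_inner_JJ (hJ : IsComplexStructure J) (x y : V) : ⟪x, J (J y)⟫ = - ⟪x, y⟫ := by
  rw [hJ.1 y, inner_neg_right]

/-- `J` as a linear isometry equivalence. -/
noncomputable def jIso (hJ : IsComplexStructure J) : V ≃ₗᵢ[ℝ] V :=
  LinearEquiv.isometryOfInner
    { toFun := J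
      map_add' := J.map_add
      map_smul' := J.map_smul
      invFun := fun x => - J x
      left_inv := fun x => by simp [hJ.1 x]
      right_inv := fun x => by simp [hJ.1 x] }
    (fun x y => hJ.2 x y)

lemma jIso_apply (hJ : IsComplexStructure J) (x : V) : jIso hJ x = J x := rfl

end Aux

section Trace
variable {V : Type*} [NormedAddCommGroup V] [InnerProductSpace ℝ V] [FiniteDimensional ℝ V]

lemma sum_diag_onb {ι κ : Type*} [Fintype ι] [Fintype κ]
    (φ : V →ₗ[ℝ] V →ₗ[ℝ] ℝ) (b : OrthonormalBasis ι ℝ V) (c : OrthonormalBasis κ ℝ V) :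
    ∑ i, φ (b i) (b i) = ∑ j, φ (c j) (c j) := by
  have key : ∀ x : V, φ x x = ∑ j, ∑ k, ⟪c j, x⟫ * ⟪c k, x⟫ * φ (c j) (c k) := by
    intro x
    have h1 : φ x x = ∑ k, ⟪c k, x⟫ * φ x (c k) := by
      calc φ x x = φ x (∑ k, ⟪c k, x⟫ • c k) := by rw [c.sum_repr' x]
        _ = ∑ k, ⟪c k, x⟫ * φ x (c k) := by
            rw [map_sum]
            exact Finset.sum_congr rfl fun k _ => by rw [LinearMap.map_smul, smul_eq_mul]
    have h2 : ∀ k, φ x (c k) = ∑ j, ⟪c j, x⟫ * φ (c j) (c k) := by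
      intro k
      calc φ x (c k) = φ (∑ j, ⟪c j, x⟫ • c j) (c k) := by rw [c.sum_repr' x]
        _ = ∑ j, ⟪c j, x⟫ * φ (c j) (c k) := by
            rw [map_sum, LinearMap.sum_apply]
            exact Finset.sum_congr rfl fun j _ => by
              rw [LinearMap.map_smul, LinearMap.smul_apply, smul_eq_mul]
    rw [h1, Finset.sum_comm]
    refine Finset.sum_congr rfl fun k _ => ?_
    rw [h2 k, Finset.mul_sum]
    exact Finset.sum_congr rfl fun j _ => by ring
  calc ∑ i, φ (b i) (b i) = ∑ i, ∑ j, ∑ k, ⟪c j, b i⟫ * ⟪c k, b i⟫ * φ (c j) (c k) := by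
        simp only [key]
    _ = ∑ j, ∑ k, (∑ i, ⟪c j, b i⟫ * ⟪b i, c k⟫) * φ (c j) (c k) := by
        rw [Finset.sum_comm]
        refine Finset.sum_congr rfl fun j _ => ?_
        rw [Finset.sum_comm]
        refine Finset.sum_congr rfl fun k _ => ?_
        rw [Finset.sum_mul]
        refine Finset.sum_congr rfl fun i _ => ?_
        rw [real_inner_comm (c k) (b i)]
    _ = ∑ j, ∑ k, ⟪c j, c k⟫ * φ (c j) (c k) := by
        simp only [OrthonormalBasis.sum_inner_mul_inner]
    _ = ∑ j, φ (c j) (c j) := by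
        refine Finset.sum_congr rfl fun j _ => ?_
        rw [Finset.sum_eq_single j]
        · rw [real_inner_self_eq_norm_sq, c.orthonormal.1 j]; norm_num
        · intro k _ hk
          rw [c.orthonormal.2 (Ne.symm hk)]; ring
        · simp
end Trace

section RicciBasics
variable {V : Type*} [NormedAddCommGroup V] [InnerProductSpace ℝ V] [FiniteDimensional ℝ V]
variable (R : CurvTensor V)

/-- `(a, b) ↦ R a y z b` as a bilinear map. -/
noncomputable def curvOuter (y z : V) : V →ₗ[ℝ] V →ₗ[ℝ] ℝ :=
  LinearMap.mk₂ ℝ (fun a b => R a y z b)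
    (fun a a' b => by simp)
    (fun c a b => by simp)
    (fun a b b' => by simp)
    (fun c a b => by simp)

/-- `(y, z) ↦ ricciT R y z` as a bilinear map. -/
noncomputable def ricciBil : V →ₗ[ℝ] V →ₗ[ℝ] ℝ :=
  LinearMap.mk₂ ℝ (ricciT R)
    (fun y y' z => by simp [ricciT, ← Finset.sum_add_distrib])
    (fun c y z => by simp [ricciT, Finset.mul_sum])
    (fun y z z' => by simp [ricciT, ← Finset.sum_add_distrib])
    (fun c y z => by simp [ricciT, Finset.mul_sum])

/-- Ricci can be computed with any orthonormal basis. -/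
lemma ricciT_onb {ι : Type*} [Fintype ι] (b : OrthonormalBasis ι ℝ V) (y z : V) :
    ricciT R y z = ∑ i, R (b i) y z (b i) :=
  sum_diag_onb (curvOuter R y z) (stdOrthonormalBasis ℝ V) b

/-- Scalar curvature can be computed with any orthonormal basis. -/
lemma scalarT_onb {ι : Type*} [Fintype ι] (b : OrthonormalBasis ι ℝ V) :
    scalarT R = ∑ i, ricciT R (b i) (b i) :=
  sum_diag_onb (ricciBil R) (stdOrthonormalBasis ℝ V) b

lemma ricciT_smul_left (c : ℝ) (y z : V) : ricciT R (c • y) z = c * ricciT R y z :=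
  congrArg (fun t => t z) (map_smul (ricciBil R) c y)

lemma ricciT_smul_right (c : ℝ) (y z : V) : ricciT R y (c • z) = c * ricciT R y z :=
  map_smul (ricciBil R y) c z

lemma ricciT_add_left (y y' z : V) : ricciT R (y + y') z = ricciT R y z + ricciT R y' z :=
  congrArg (fun t => t z) (map_add (ricciBil R) y y')

lemma ricciT_add_right (y z z' : V) : ricciT R y (z + z') = ricciT R y z + ricciT R y z' :=
  map_add (ricciBil R y) z z'

lemma ricciT_neg_left (y z : V) : ricciT R (-y) z = - ricciT R y z :=
  congrArg (fun t => t z) (map_neg (ricciBil R) y)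

lemma ricciT_neg_right (y z : V) : ricciT R y (-z) = - ricciT R y z :=
  map_neg (ricciBil R y) z

end RicciBasics

section ONBmk
variable {V : Type*} [NormedAddCommGroup V] [InnerProductSpace ℝ V] [FiniteDimensional ℝ V]

noncomputable def onbOfCard {ι : Type*} [Fintype ι] (g : ι → V) (h : Orthonormal ℝ g)
    (hc : Fintype.card ι = Module.finrank ℝ V) : OrthonormalBasis ι ℝ V :=
  OrthonormalBasis.mk h (h.linearIndependent.span_eq_top_of_card_eq_finrank' (by simp [hc])).ge

lemma onbOfCard_apply {ι : Type*} [Fintype ι] (g : ι → V) (h) (hc) (i : ι) :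
    onbOfCard g h hc i = g i := by simp [onbOfCard]

end ONBmk

section Kahler
variable {V : Type*} [NormedAddCommGroup V] [InnerProductSpace ℝ V] [FiniteDimensional ℝ V]
variable {J : V →ₗ[ℝ] V} {R : CurvTensor V}
variable (hJ : IsComplexStructure J) (hK : IsKahlerCurv J R)
include hJ hK

/-- Kähler symmetry in the first pair. -/
lemma kahler₁ (x y z u : V) : R (J x) (J y) z u = R x y z u := by
  rw [hK.symm (J x) (J y) z u, ← hK.kahler z u x y, hK.symm z u x y]

lemma pair_swap (x y z u : V) : R x y z u = R y x u z := by
  rw [hK.skew₁, hK.skew₂]; ring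

/-- Ricci tensor is symmetric. -/
lemma ricciT_symm (y z : V) : ricciT R y z = ricciT R z y := by
  unfold ricciT
  refine Finset.sum_congr rfl fun i _ => ?_
  set a := stdOrthonormalBasis ℝ V i
  calc R a y z a = R z a a y := hK.symm a y z a
    _ = R a z y a := (pair_swap hJ hK z a a y)

/-- Ricci tensor is J-invariant. -/
lemma ricciT_J (y z : V) : ricciT R (J y) (J z) = ricciT R y z := by
  have step : ∀ b : V, R b (J y) (J z) b = R (J b) y z (J b) := by
    intro b
    have h1 : R b (J y) (J z) b = - R (J b) y (J z) b := by
      rw [← kahler₁ hJ hK b (J y) (J z) b, hJ.1 y]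
      simp [hK.skew₁ (J b) (-y) (J z) b, hK.skew₁ (J b) y (J z) b]
    have h2 : R (J b) y z (J b) = - R (J b) y (J z) b := by
      rw [hK.kahler (J b) y z (J b), hJ.1 b]
      simp [hK.skew₂ (J b) y (J z) (-b), hK.skew₂ (J b) y (J z) b]
    rw [h1, h2]
  rw [ricciT_onb R (stdOrthonormalBasis ℝ V) (J y) (J z)]
  rw [ricciT_onb R ((stdOrthonormalBasis ℝ V).map (jIso hJ)) y z]
  refine Finset.sum_congr rfl fun i _ => ?_
  rw [step]
  rfl

lemma ricciT_J_skew (y z : V) : ricciT R y (J z) = - ricciT R (J y) z := by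
  have := ricciT_J hJ hK y (J z)
  rw [hJ.1 z] at this
  rw [← this, ricciT_neg_right]

lemma ricciT_J_skew' (y z : V) : ricciT R (J y) z = - ricciT R y (J z) := by
  rw [ricciT_J_skew hJ hK]; ring

end Kahler

section Core
variable {V : Type*} [NormedAddCommGroup V] [InnerProductSpace ℝ V] [FiniteDimensional ℝ V]
variable {J : V →ₗ[ℝ] V} {T : CurvTensor V}

/-- Holomorphic sectional numerator. -/
noncomputable def qh (T : CurvTensor V) (J : V →ₗ[ℝ] V) (x : V) : ℝ := T x (J x) (J x) x

/-- Sectional numerator. -/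
noncomputable def sec (T : CurvTensor V) (x y : V) : ℝ := T x y y x

variable (hJ : IsComplexStructure J) (hK : IsKahlerCurv J T)
include hJ hK

lemma sec_swap (x y : V) : sec T x y = sec T y x := by
  unfold sec; exact pair_swap hJ hK x y y x

lemma sec_negr (x y : V) : sec T x (-y) = sec T x y := by
  unfold sec; simp

lemma qh_J (x : V) : qh T J (J x) = qh T J x := by
  unfold qh
  rw [hJ.1 x]
  have h1 : T (J x) (-x) (-x) (J x) = T (J x) x x (J x) := by simp
  rw [h1]
  exact (pair_swap hJ hK x (J x) (J x) x).symm

lemma qh_smul (c : ℝ) (x : V) : qh T J (c • x) = c^4 * qh T J x := by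
  unfold qh
  rw [map_smul]
  simp only [map_smul, LinearMap.smul_apply, smul_eq_mul]
  ring

-- mixed-term reductions (valid for all x y)
lemma claim_a (x y : V) : T y (J y) (J x) x = T x (J x) (J y) y := by
  rw [hK.symm y (J y) (J x) x]
  exact pair_swap hJ hK (J x) x y (J y)

lemma claim_d (x y : V) : T x (J y) (J x) y = sec T x (J y) := by
  unfold sec
  have h := hK.kahler x (J y) (J y) x
  rw [hJ.1 y] at h
  have h2 : T x (J y) (-y) (J x) = - T x (J y) y (J x) := by simp
  rw [h, h2, hK.skew₂ x (J y) y (J x)]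
  ring

lemma claim_b (x y : V) : T y (J x) (J y) x = sec T x (J y) := by
  rw [hK.symm y (J x) (J y) x, pair_swap hJ hK (J y) x y (J x)]
  exact claim_d hJ hK x y

lemma claim_c (x y : V) : T y (J x) (J x) y = sec T x (J y) := by
  have h := hK.kahler y (J x) (J x) y
  rw [hJ.1 x] at h
  have h2 : T y (J x) (-x) (J y) = - T y (J x) x (J y) := by simp
  rw [h, h2, hK.skew₂ y (J x) x (J y)]
  have : T y (J x) (J y) x = sec T x (J y) := claim_b hJ hK x y
  linarith [this]

lemma claim_f (x y : V) : T x (J x) (J y) y = sec T x y + sec T x (J y) := by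
  have hb := hK.bianchi x (J x) (J y) y
  have h1 : T (J x) (J y) x y = - sec T x y := by
    rw [kahler₁ hJ hK x y x y, hK.skew₂ x y x y]
    unfold sec; ring
  have h2 : T (J y) x (J x) y = - sec T x (J y) := by
    rw [hK.skew₁ (J y) x (J x) y]
    have := claim_d hJ hK x y
    linarith [this]
  linarith [hb, h1, h2]

/-- Master expansion: `Q(x+y) + Q(x-y) = 2Qx + 2Qy + 4 k(x,y) + 12 k(x,Jy)`. -/
lemma master (x y : V) :
    qh T J (x + y) + qh T J (x - y)
      = 2 * qh T J x + 2 * qh T J y + 4 * sec T x y + 12 * sec T x (J y) := by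
  have expand : qh T J (x + y) + qh T J (x - y)
      = 2 * qh T J x + 2 * qh T J y +
        2 * (T y (J y) (J x) x + T y (J x) (J y) x + T y (J x) (J x) y
            + T x (J y) (J y) x + T x (J y) (J x) y + T x (J x) (J y) y) := by
    unfold qh
    simp only [map_add, map_sub, LinearMap.add_apply, LinearMap.sub_apply, sub_apply3]
    ring
  rw [expand, claim_a hJ hK, claim_b hJ hK, claim_c hJ hK, claim_d hJ hK, claim_f hJ hK]
  have : T x (J y) (J y) x = sec T x (J y) := rfl
  rw [this]
  ring

/-- A Kähler-type curvature tensor with vanishing holomorphic sectional values vanishes. -/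
lemma kahler_vanish (hQ : ∀ x, qh T J x = 0) : ∀ x y z u, T x y z u = 0 := by
  -- sectional values vanish
  have hsec : ∀ x y, sec T x y = 0 := by
    have h1 : ∀ x y, 4 * sec T x y + 12 * sec T x (J y) = 0 := by
      intro x y
      have := master hJ hK x y
      rw [hQ (x+y), hQ (x-y), hQ x, hQ y] at this
      linarith
    intro x y
    have e1 := h1 x y
    have e2 := h1 x (J y)
    rw [hJ.1 y, sec_negr hJ hK] at e2
    linarith
  -- T x y y z = 0
  have hsec2 : ∀ x y z, T x y y z = 0 := by
    intro x y z
    have e := hsec (x + z) y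
    unfold sec at e hsec
    simp only [map_add, LinearMap.add_apply] at e
    have h2 : T z y y x = T x y y z := by
      rw [hK.symm z y y x]
      exact pair_swap hJ hK y x z y
    rw [hsec x y, hsec z y, h2] at e
    linarith
  -- antisymmetry in middle slots
  have hmid : ∀ x y z u, T x y z u = - T x z y u := by
    intro x y z u
    have e := hsec2 x (y + z) u
    simp only [map_add, LinearMap.add_apply] at e
    rw [hsec2 x y u, hsec2 x z u] at e
    linarith
  intro x y z u
  have hb := hK.bianchi x y z u
  have h1 : T y z x u = T x y z u := by
    have a1 := hmid y z x u
    have a2 := hK.skew₁ x y z u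
    linarith
  have h2 : T z x y u = T x y z u := by
    have a1 := hmid z x y u
    have a2 := hK.skew₁ z y x u
    linarith [h1]
  linarith [hb, h1, h2]

end Core

section Phi
variable {V : Type*} [NormedAddCommGroup V] [InnerProductSpace ℝ V]
variable {J : V →ₗ[ℝ] V}

/-- The correction bracket built from a bilinear form `S`. -/
noncomputable def phiT (J : V →ₗ[ℝ] V) (S : V → V → ℝ) (x y z u : V) : ℝ :=
  ⟪x, u⟫ * S y z - ⟪x, z⟫ * S y u + ⟪y, z⟫ * S x u - ⟪y, u⟫ * S x z
  + ⟪x, J u⟫ * S y (J z) - ⟪x, J z⟫ * S y (J u)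
  + ⟪y, J z⟫ * S x (J u) - ⟪y, J u⟫ * S x (J z)
  - 2 * ⟪x, J y⟫ * S z (J u) - 2 * ⟪z, J u⟫ * S x (J y)

variable {S : V → V → ℝ} (hJ : IsComplexStructure J)
  (Ssymm : ∀ a b, S a b = S b a)
  (SJswap : ∀ a b, S a (J b) = - S (J a) b)
  (SJJ : ∀ a b, S (J a) (J b) = S a b)

include hJ Ssymm SJswap in
lemma S_J_anti (a b : V) : S b (J a) = - S a (J b) := by
  rw [SJswap b a, Ssymm (J b) a, SJswap a b]

include hJ in
lemma g_J_anti (a b : V) : ⟪b, J a⟫ = - ⟪a, J b⟫ := by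
  rw [← ics_inner_J_left hJ a b]
  exact real_inner_comm (J a) b

include hJ Ssymm SJswap

lemma phi_skew₁ (x y z u : V) : phiT J S x y z u = - phiT J S y x z u := by
  unfold phiT
  rw [g_J_anti hJ x y, S_J_anti hJ Ssymm SJswap x y]
  ring

lemma phi_skew₂ (x y z u : V) : phiT J S x y z u = - phiT J S x y u z := by
  unfold phiT
  rw [g_J_anti hJ z u, S_J_anti hJ Ssymm SJswap z u]
  ring

lemma phi_symm (x y z u : V) : phiT J S x y z u = phiT J S z u x y := by
  unfold phiT
  rw [g_J_anti hJ y z, g_J_anti hJ x z, g_J_anti hJ x u, g_J_anti hJ y u,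
    S_J_anti hJ Ssymm SJswap x u, S_J_anti hJ Ssymm SJswap y u,
    S_J_anti hJ Ssymm SJswap y z, S_J_anti hJ Ssymm SJswap x z,
    real_inner_comm z y, real_inner_comm z x, real_inner_comm u x, real_inner_comm u y,
    Ssymm u x, Ssymm u y, Ssymm z y, Ssymm z x]
  ring

lemma phi_bianchi (x y z u : V) :
    phiT J S x y z u + phiT J S y z x u + phiT J S z x y u = 0 := by
  unfold phiT
  rw [g_J_anti hJ x y, g_J_anti hJ x z, g_J_anti hJ y z,
    S_J_anti hJ Ssymm SJswap x z, S_J_anti hJ Ssymm SJswap x y,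
    S_J_anti hJ Ssymm SJswap y z,
    real_inner_comm y x, real_inner_comm z x, real_inner_comm z y,
    Ssymm z x, Ssymm y x, Ssymm z y]
  ring

include SJJ in
lemma phi_kahler (x y z u : V) : phiT J S x y z u = phiT J S x y (J z) (J u) := by
  have hSJJ : ∀ a b, S a (J (J b)) = - S a b := by
    intro a b
    rw [SJswap a (J b), SJJ a b]
  unfold phiT
  rw [show ⟪x, J (J u)⟫ = - ⟪x, u⟫ from ics_inner_JJ hJ x u,
    show ⟪x, J (J z)⟫ = - ⟪x, z⟫ from ics_inner_JJ hJ x z,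
    show ⟪y, J (J z)⟫ = - ⟪y, z⟫ from ics_inner_JJ hJ y z,
    show ⟪y, J (J u)⟫ = - ⟪y, u⟫ from ics_inner_JJ hJ y u,
    hSJJ y z, hSJJ y u, hSJJ x u, hSJJ x z,
    show (⟪J z, J (J u)⟫ : ℝ) = ⟪z, J u⟫ from hJ.2 z (J u),
    SJJ z (J u)]
  ring

end Phi

section Curry
variable {V : Type*} [NormedAddCommGroup V] [InnerProductSpace ℝ V]

/-- Package a quadrilinear function as a `CurvTensor`. -/
noncomputable def curry4 (f : V → V → V → V → ℝ)
    (ha1 : ∀ a a' y z u, f (a + a') y z u = f a y z u + f a' y z u)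
    (hs1 : ∀ (c : ℝ) a y z u, f (c • a) y z u = c * f a y z u)
    (ha2 : ∀ x a a' z u, f x (a + a') z u = f x a z u + f x a' z u)
    (hs2 : ∀ (c : ℝ) x a z u, f x (c • a) z u = c * f x a z u)
    (ha3 : ∀ x y a a' u, f x y (a + a') u = f x y a u + f x y a' u)
    (hs3 : ∀ (c : ℝ) x y a u, f x y (c • a) u = c * f x y a u)
    (ha4 : ∀ x y z a a', f x y z (a + a') = f x y z a + f x y z a')
    (hs4 : ∀ (c : ℝ) x y z a, f x y z (c • a) = c * f x y z a) : CurvTensor V :=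
  LinearMap.mk₂ ℝ (fun x y => LinearMap.mk₂ ℝ (f x y)
      (fun z z' u => ha3 x y z z' u) (fun c z u => hs3 c x y z u)
      (fun z u u' => ha4 x y z u u') (fun c z u => hs4 c x y z u))
    (fun x x' y => LinearMap.ext fun z => LinearMap.ext fun u => by
      simp only [LinearMap.mk₂_apply, LinearMap.add_apply]; exact ha1 x x' y z u)
    (fun c x y => LinearMap.ext fun z => LinearMap.ext fun u => by
      simp only [LinearMap.mk₂_apply, LinearMap.smul_apply, smul_eq_mul]; exact hs1 c x y z u)
    (fun x y y' => LinearMap.ext fun z => LinearMap.ext fun u => by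
      simp only [LinearMap.mk₂_apply, LinearMap.add_apply]; exact ha2 x y y' z u)
    (fun c x y => LinearMap.ext fun z => LinearMap.ext fun u => by
      simp only [LinearMap.mk₂_apply, LinearMap.smul_apply, smul_eq_mul]; exact hs2 c x y z u)

lemma curry4_apply (f : V → V → V → V → ℝ) (ha1 hs1 ha2 hs2 ha3 hs3 ha4 hs4)
    (x y z u : V) : curry4 f ha1 hs1 ha2 hs2 ha3 hs3 ha4 hs4 x y z u = f x y z u := rfl

end Curry

section BochnerC
variable {V : Type*} [NormedAddCommGroup V] [InnerProductSpace ℝ V] [FiniteDimensional ℝ V]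
variable (m : ℕ) (J : V →ₗ[ℝ] V) (R : CurvTensor V)

lemma bochner_eq (x y z u : V) :
    bochnerT m J R x y z u
      = R x y z u - (1 / (2 * ((m : ℝ) + 2))) * phiT J (ricciT R) x y z u
        + (scalarT R / (4 * ((m : ℝ) + 1) * ((m : ℝ) + 2)) / 2)
            * phiT J (fun a b => ⟪a, b⟫) x y z u := by
  simp only [bochnerT, phiT]
  ring

/-- The Bochner tensor, packaged as a `CurvTensor`. -/
noncomputable def bochnerC : CurvTensor V :=
  curry4 (bochnerT m J R)
    (fun a a' y z u => by
      simp only [bochnerT, map_add, LinearMap.add_apply, inner_add_left,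
        ricciT_add_left]; ring)
    (fun c a y z u => by
      simp only [bochnerT, map_smul, LinearMap.smul_apply, real_inner_smul_left,
        ricciT_smul_left, smul_eq_mul]; ring)
    (fun x a a' z u => by
      simp only [bochnerT, map_add, LinearMap.add_apply, inner_add_left, inner_add_right,
        ricciT_add_left, ricciT_add_right]; ring)
    (fun c x a z u => by
      simp only [bochnerT, map_smul, LinearMap.smul_apply, real_inner_smul_left,
        real_inner_smul_right, ricciT_smul_left, ricciT_smul_right, smul_eq_mul]; ring)
    (fun x y a a' u => by
      simp only [bochnerT, map_add, LinearMap.add_apply, inner_add_left, inner_add_right,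
        ricciT_add_left, ricciT_add_right]; ring)
    (fun c x y a u => by
      simp only [bochnerT, map_smul, LinearMap.smul_apply, real_inner_smul_left,
        real_inner_smul_right, ricciT_smul_left, ricciT_smul_right, smul_eq_mul]; ring)
    (fun x y z a a' => by
      simp only [bochnerT, map_add, LinearMap.add_apply, inner_add_left, inner_add_right,
        ricciT_add_left, ricciT_add_right]; ring)
    (fun c x y z a => by
      simp only [bochnerT, map_smul, LinearMap.smul_apply, real_inner_smul_left,
        real_inner_smul_right, ricciT_smul_left, ricciT_smul_right, smul_eq_mul]; ring)

lemma bochnerC_apply (x y z u : V) :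
    bochnerC m J R x y z u = bochnerT m J R x y z u := rfl

variable {J R}
variable (hJ : IsComplexStructure J) (hK : IsKahlerCurv J R)
include hJ hK

lemma ricci_SJswap : ∀ a b : V, ricciT R a (J b) = - ricciT R (J a) b :=
  fun a b => ricciT_J_skew hJ hK a b

lemma inner_Ssymm : ∀ a b : V, (⟪a, b⟫ : ℝ) = ⟪b, a⟫ := fun a b => real_inner_comm b a

lemma inner_SJswap : ∀ a b : V, (⟪a, J b⟫ : ℝ) = - ⟪J a, b⟫ := by
  intro a b
  rw [ics_inner_J_left hJ a b]; ring

/-- The Bochner tensor is of Kähler curvature type. -/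
lemma bochnerC_kahlerCurv : IsKahlerCurv J (bochnerC m J R) := by
  constructor
  · intro x y z u
    rw [bochnerC_apply, bochnerC_apply, bochner_eq, bochner_eq]
    linear_combination (hK.skew₁ x y z u)
      - (1 / (2 * ((m : ℝ) + 2))) * (phi_skew₁ hJ (ricciT_symm hJ hK) (ricci_SJswap hJ hK) x y z u)
      + (scalarT R / (4 * ((m : ℝ) + 1) * ((m : ℝ) + 2)) / 2)
          * (phi_skew₁ hJ (inner_Ssymm hJ hK) (inner_SJswap hJ hK) x y z u)
  · intro x y z u
    rw [bochnerC_apply, bochnerC_apply, bochner_eq, bochner_eq]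
    linear_combination (hK.skew₂ x y z u)
      - (1 / (2 * ((m : ℝ) + 2))) * (phi_skew₂ hJ (ricciT_symm hJ hK) (ricci_SJswap hJ hK) x y z u)
      + (scalarT R / (4 * ((m : ℝ) + 1) * ((m : ℝ) + 2)) / 2)
          * (phi_skew₂ hJ (inner_Ssymm hJ hK) (inner_SJswap hJ hK) x y z u)
  · intro x y z u
    rw [bochnerC_apply, bochnerC_apply, bochner_eq, bochner_eq]
    linear_combination (hK.symm x y z u)
      - (1 / (2 * ((m : ℝ) + 2))) * (phi_symm hJ (ricciT_symm hJ hK) (ricci_SJswap hJ hK) x y z u)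
      + (scalarT R / (4 * ((m : ℝ) + 1) * ((m : ℝ) + 2)) / 2)
          * (phi_symm hJ (inner_Ssymm hJ hK) (inner_SJswap hJ hK) x y z u)
  · intro x y z u
    rw [bochnerC_apply, bochnerC_apply, bochnerC_apply, bochner_eq, bochner_eq, bochner_eq]
    linear_combination (hK.bianchi x y z u)
      - (1 / (2 * ((m : ℝ) + 2))) * (phi_bianchi hJ (ricciT_symm hJ hK) (ricci_SJswap hJ hK) x y z u)
      + (scalarT R / (4 * ((m : ℝ) + 1) * ((m : ℝ) + 2)) / 2)
          * (phi_bianchi hJ (inner_Ssymm hJ hK) (inner_SJswap hJ hK) x y z u)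
  · intro x y z u
    rw [bochnerC_apply, bochnerC_apply, bochner_eq, bochner_eq]
    linear_combination (hK.kahler x y z u)
      - (1 / (2 * ((m : ℝ) + 2))) * (phi_kahler hJ (ricciT_symm hJ hK) (ricci_SJswap hJ hK) (ricciT_J hJ hK) x y z u)
      + (scalarT R / (4 * ((m : ℝ) + 1) * ((m : ℝ) + 2)) / 2)
          * (phi_kahler hJ (inner_Ssymm hJ hK) (inner_SJswap hJ hK) (fun a b => hJ.2 a b) x y z u)

end BochnerC

section Adapted
variable {V : Type*} [NormedAddCommGroup V] [InnerProductSpace ℝ V] [FiniteDimensional ℝ V]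
variable {J : V →ₗ[ℝ] V} {m : ℕ}

/-- The full orthonormal family attached to an adapted family. -/
lemma adapted_orthonormal (hJ : IsComplexStructure J) {e : Fin m → V}
    (he : IsAdaptedBasis J e) : Orthonormal ℝ (Sum.elim e (J ∘ e)) := by
  rw [orthonormal_iff_ite]
  rintro (i | i) (j | j)
  · simpa using he.1 i j
  · simpa using he.2 i j
  · simp only [Sum.elim_inl, Sum.elim_inr, Function.comp_apply]
    rw [ics_inner_J_left hJ (e i) (e j), he.2 i j]
    simp
  · simp only [Sum.elim_inr, Function.comp_apply]
    rw [hJ.2 (e i) (e j), he.1 i j]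
    simp [Sum.inr.injEq]

variable (hdim : Module.finrank ℝ V = 2 * m)
include hdim

/-- An adapted family yields an orthonormal basis of `V`. -/
noncomputable def adaptedONB (hJ : IsComplexStructure J) {e : Fin m → V}
    (he : IsAdaptedBasis J e) : OrthonormalBasis (Fin m ⊕ Fin m) ℝ V :=
  onbOfCard _ (adapted_orthonormal hJ he) (by simp [hdim]; ring)

lemma adaptedONB_inl (hJ : IsComplexStructure J) {e : Fin m → V}
    (he : IsAdaptedBasis J e) (i : Fin m) : adaptedONB hdim hJ he (Sum.inl i) = e i := by
  simp [adaptedONB, onbOfCard_apply]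

lemma adaptedONB_inr (hJ : IsComplexStructure J) {e : Fin m → V}
    (he : IsAdaptedBasis J e) (i : Fin m) : adaptedONB hdim hJ he (Sum.inr i) = J (e i) := by
  simp [adaptedONB, onbOfCard_apply]

variable {R : CurvTensor V}

/-- Ricci tensor computed with an adapted basis. -/
lemma ricciT_adapted (hJ : IsComplexStructure J) (hK : IsKahlerCurv J R)
    {e : Fin m → V} (he : IsAdaptedBasis J e) (y z : V) :
    ricciT R y z = ∑ i, (R (e i) y z (e i) + R (J (e i)) y z (J (e i))) := by
  rw [ricciT_onb R (adaptedONB hdim hJ he) y z, Fintype.sum_sum_type,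
    ← Finset.sum_add_distrib]
  refine Finset.sum_congr rfl fun i _ => ?_
  rw [adaptedONB_inl hdim hJ he i, adaptedONB_inr hdim hJ he i]

/-- Scalar curvature computed with an adapted basis. -/
lemma scalarT_adapted (hJ : IsComplexStructure J) (hK : IsKahlerCurv J R)
    {e : Fin m → V} (he : IsAdaptedBasis J e) :
    scalarT R = 2 * ∑ i, ricciT R (e i) (e i) := by
  rw [scalarT_onb R (adaptedONB hdim hJ he), Fintype.sum_sum_type]
  have h1 : ∀ i, ricciT R (adaptedONB hdim hJ he (Sum.inl i)) (adaptedONB hdim hJ he (Sum.inl i))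
      = ricciT R (e i) (e i) := fun i => by rw [adaptedONB_inl hdim hJ he i]
  have h2 : ∀ i, ricciT R (adaptedONB hdim hJ he (Sum.inr i)) (adaptedONB hdim hJ he (Sum.inr i))
      = ricciT R (e i) (e i) := fun i => by
    rw [adaptedONB_inr hdim hJ he i, ricciT_J hJ hK]
  rw [Finset.sum_congr rfl fun i _ => h1 i, Finset.sum_congr rfl fun i _ => h2 i]
  ring

/-- Any adapted family of `k ≤ m` vectors extends to a full adapted family. -/
lemma adapted_extend (hJ : IsComplexStructure J) :
    ∀ (d k : ℕ) (hk : k + d = m) (e : Fin k → V),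
    (∀ i j, ⟪e i, e j⟫ = if i = j then 1 else 0) → (∀ i j, ⟪e i, J (e j)⟫ = 0) →
    ∃ f : Fin m → V, IsAdaptedBasis J f ∧ ∀ i : Fin k, f ⟨i.1, by omega⟩ = e i := by
  intro d
  induction d with
  | zero =>
    intro k hk e h1 h2
    subst hk
    refine ⟨fun i => e ⟨i.1, by omega⟩, ⟨fun i j => by rw [h1]; simp [Fin.ext_iff],
      fun i j => h2 _ _⟩, fun i => by simp⟩
  | succ d ih =>
    intro k hk e h1 h2
    set W := Submodule.span ℝ (Set.range (Sum.elim e (J ∘ e))) with hW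
    have hWne : W ≠ ⊤ := by
      intro hcon
      have hle : Module.finrank ℝ W ≤ Fintype.card (Fin k ⊕ Fin k) :=
        finrank_range_le_card _
      have heq : Module.finrank ℝ W = Module.finrank ℝ V := by
        rw [hcon]; exact finrank_top ℝ V
      simp only [Fintype.card_sum, Fintype.card_fin] at hle
      omega
    have hbot : Wᗮ ≠ ⊥ := fun hcon => hWne (Submodule.orthogonal_eq_bot_iff.mp hcon)
    obtain ⟨v, hvW, hv0⟩ := Submodule.exists_mem_ne_zero_of_ne_bot hbot
    set x := (‖v‖⁻¹ : ℝ) • v with hx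
    have hxW : x ∈ Wᗮ := Submodule.smul_mem _ _ hvW
    have hxx : ⟪x, x⟫ = 1 := by
      rw [hx, real_inner_smul_left, real_inner_smul_right, real_inner_self_eq_norm_sq]
      have : ‖v‖ ≠ 0 := norm_ne_zero_iff.mpr hv0
      field_simp
    have hxe : ∀ i, ⟪e i, x⟫ = 0 :=
      fun i => (Submodule.mem_orthogonal _ _).mp hxW (e i) (Submodule.subset_span ⟨Sum.inl i, rfl⟩)
    have hxJe : ∀ i, ⟪J (e i), x⟫ = 0 :=
      fun i => (Submodule.mem_orthogonal _ _).mp hxW _ (Submodule.subset_span ⟨Sum.inr i, rfl⟩)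
    set e' : Fin (k+1) → V := Fin.snoc e x with he'
    have he'cast : ∀ i : Fin k, e' i.castSucc = e i := fun i => by simp [he']
    have he'last : e' (Fin.last k) = x := by simp [he']
    have h1' : ∀ i j, ⟪e' i, e' j⟫ = if i = j then 1 else 0 := by
      intro i j
      induction i using Fin.lastCases with
      | last =>
        induction j using Fin.lastCases with
        | last => rw [he'last, hxx, if_pos rfl]
        | cast j =>
          rw [he'last, he'cast, real_inner_comm, hxe j,
            if_neg (Fin.castSucc_lt_last j).ne']
      | cast i =>
        induction j using Fin.lastCases with
        | last =>
          rw [he'last, he'cast, hxe i, if_neg (Fin.castSucc_lt_last i).ne]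
        | cast j =>
          rw [he'cast, he'cast, h1 i j]
          simp [Fin.castSucc_inj]
    have h2' : ∀ i j, ⟪e' i, J (e' j)⟫ = 0 := by
      intro i j
      induction i using Fin.lastCases with
      | last =>
        induction j using Fin.lastCases with
        | last => rw [he'last]; exact ics_inner_J_self hJ x
        | cast j =>
          rw [he'last, he'cast, real_inner_comm]
          exact hxJe j
      | cast i =>
        induction j using Fin.lastCases with
        | last =>
          rw [he'last, he'cast]
          have := ics_inner_J_left hJ (e i) x
          have h0 := hxJe i
          linarith
        | cast j =>
          rw [he'cast, he'cast]
          exact h2 i j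
    obtain ⟨f, hf, hfi⟩ := ih (k+1) (by omega) e' h1' h2'
    refine ⟨f, hf, fun i => ?_⟩
    have := hfi ⟨i.1, by omega⟩
    rw [show ((⟨i.1, by omega⟩ : Fin (k+1)) : Fin (k+1)) = i.castSucc from by
      simp [Fin.ext_iff], he'cast] at this
    exact this

end Adapted

section Rotation
variable {V : Type*} [NormedAddCommGroup V] [InnerProductSpace ℝ V] [FiniteDimensional ℝ V]
variable {J : V →ₗ[ℝ] V} {m : ℕ} {R : CurvTensor V}

lemma sum_update₂ (v : Fin m → ℝ) (i j : Fin m) (hij : i ≠ j) (a b : ℝ) :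
    ∑ l, Function.update (Function.update v i a) j b l
      = (∑ l, v l) - v i - v j + a + b := by
  classical
  have h1 : ∑ l, Function.update (Function.update v i a) j b l
      = b + ∑ l ∈ Finset.univ \ {j}, Function.update v i a l :=
    Finset.sum_update_of_mem (Finset.mem_univ j) _ _
  have hi : i ∈ Finset.univ \ {j} := by simp [hij]
  have h2 : ∑ l ∈ Finset.univ \ {j}, Function.update v i a l
      = a + ∑ l ∈ (Finset.univ \ {j}) \ {i}, v l :=
    Finset.sum_update_of_mem hi _ _
  have h3 : ∑ l, v l = v j + ∑ l ∈ Finset.univ \ {j}, v l :=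
    Finset.sum_eq_add_sum_sdiff_singleton_of_mem (Finset.mem_univ j) v
  have h4 : ∑ l ∈ Finset.univ \ {j}, v l = v i + ∑ l ∈ (Finset.univ \ {j}) \ {i}, v l :=
    Finset.sum_eq_add_sum_sdiff_singleton_of_mem hi v
  linarith

lemma update₂_adapted (hJ : IsComplexStructure J) {e : Fin m → V}
    (he : IsAdaptedBasis J e) (i j : Fin m) (hij : i ≠ j) (a b : V)
    (haa : ⟪a, a⟫ = 1) (hbb : ⟪b, b⟫ = 1) (hab : ⟪a, b⟫ = 0) (haJb : ⟪a, J b⟫ = 0)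
    (hae : ∀ l, l ≠ i → l ≠ j → ⟪a, e l⟫ = 0)
    (haJe : ∀ l, l ≠ i → l ≠ j → ⟪a, J (e l)⟫ = 0)
    (hbe : ∀ l, l ≠ i → l ≠ j → ⟪b, e l⟫ = 0)
    (hbJe : ∀ l, l ≠ i → l ≠ j → ⟪b, J (e l)⟫ = 0) :
    IsAdaptedBasis J (Function.update (Function.update e i a) j b) := by
  classical
  have hba : ⟪b, a⟫ = 0 := by rw [real_inner_comm a b]; exact hab
  have hbJa : ⟪b, J a⟫ = 0 := by rw [g_J_anti hJ a b, haJb]; ring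
  have hf : ∀ p, Function.update (Function.update e i a) j b p
      = if p = j then b else if p = i then a else e p := by
    intro p
    simp [Function.update_apply]
  constructor
  · intro p q
    rw [hf p, hf q]
    by_cases hpj : p = j
    · rw [if_pos hpj]
      by_cases hqj : q = j
      · rw [if_pos hqj, if_pos (hpj.trans hqj.symm)]; exact hbb
      · rw [if_neg hqj]
        by_cases hqi : q = i
        · rw [if_pos hqi, if_neg (fun h : p = q => hij (by rw [← hqi, ← h, hpj]))]
          exact hba
        · rw [if_neg hqi, if_neg (fun h : p = q => hqj (h ▸ hpj))]
          exact hbe q hqi hqj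
    · rw [if_neg hpj]
      by_cases hpi : p = i
      · rw [if_pos hpi]
        by_cases hqj : q = j
        · rw [if_pos hqj, if_neg (fun h : p = q => hij (by rw [← hpi, h, hqj]))]
          exact hab
        · rw [if_neg hqj]
          by_cases hqi : q = i
          · rw [if_pos hqi, if_pos (hpi.trans hqi.symm)]; exact haa
          · rw [if_neg hqi, if_neg (fun h : p = q => hqi (h ▸ hpi))]
            exact hae q hqi hqj
      · rw [if_neg hpi]
        by_cases hqj : q = j
        · rw [if_pos hqj, if_neg (fun h : p = q => hpj (h.trans hqj))]
          rw [real_inner_comm]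
          exact hbe p hpi hpj
        · rw [if_neg hqj]
          by_cases hqi : q = i
          · rw [if_pos hqi, if_neg (fun h : p = q => hpi (h.trans hqi))]
            rw [real_inner_comm]
            exact hae p hpi hpj
          · rw [if_neg hqi]; exact he.1 p q
  · intro p q
    rw [hf p, hf q]
    by_cases hpj : p = j
    · rw [if_pos hpj]
      by_cases hqj : q = j
      · rw [if_pos hqj]; exact ics_inner_J_self hJ b
      · rw [if_neg hqj]
        by_cases hqi : q = i
        · rw [if_pos hqi]; exact hbJa
        · rw [if_neg hqi]; exact hbJe q hqi hqj
    · rw [if_neg hpj]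
      by_cases hpi : p = i
      · rw [if_pos hpi]
        by_cases hqj : q = j
        · rw [if_pos hqj]; exact haJb
        · rw [if_neg hqj]
          by_cases hqi : q = i
          · rw [if_pos hqi]; exact ics_inner_J_self hJ a
          · rw [if_neg hqi]; exact haJe q hqi hqj
      · rw [if_neg hpi]
        by_cases hqj : q = j
        · rw [if_pos hqj, g_J_anti hJ b (e p), hbJe p hpi hpj]; ring
        · rw [if_neg hqj]
          by_cases hqi : q = i
          · rw [if_pos hqi, g_J_anti hJ a (e p), haJe p hpi hpj]; ring
          · rw [if_neg hqi]; exact he.2 p q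

end Rotation

section Diag
variable {V : Type*} [NormedAddCommGroup V] [InnerProductSpace ℝ V]
variable {J : V →ₗ[ℝ] V} {S : V → V → ℝ}

lemma phi_diag (hJ : IsComplexStructure J)
    (Ssymm : ∀ a b, S a b = S b a)
    (SJswap : ∀ a b, S a (J b) = - S (J a) b)
    (SJJ : ∀ a b, S (J a) (J b) = S a b) (x : V) :
    phiT J S x (J x) (J x) x = 8 * ⟪x, x⟫ * S x x := by
  have hS0 : S x (J x) = 0 := by
    have h1 := SJswap x x
    have h2 := Ssymm (J x) x
    linarith
  have hS0' : S (J x) x = 0 := by rw [Ssymm (J x) x]; exact hS0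
  have hSJJd : S (J x) (J x) = S x x := SJJ x x
  have hSxJJx : S x (J (J x)) = - S x x := by rw [SJswap x (J x), SJJ x x]
  have hSJxJJx : S (J x) (J (J x)) = 0 := by rw [SJJ x (J x)]; exact hS0
  have hg1 : ⟪x, J x⟫ = 0 := ics_inner_J_self hJ x
  have hg2 : ⟪J x, x⟫ = 0 := by rw [real_inner_comm x (J x)]; exact hg1
  have hg3 : ⟪J x, J x⟫ = ⟪x, x⟫ := hJ.2 x x
  have hg4 : ⟪x, J (J x)⟫ = - ⟪x, x⟫ := ics_inner_JJ hJ x x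
  have hg5 : ⟪J x, J (J x)⟫ = 0 := by rw [hJ.2 x (J x)]; exact hg1
  unfold phiT
  rw [hS0, hS0', hSJJd, hSxJJx, hSJxJJx, hg1, hg2, hg3, hg4, hg5]
  ring

end Diag

section QB
variable {V : Type*} [NormedAddCommGroup V] [InnerProductSpace ℝ V] [FiniteDimensional ℝ V]
variable {J : V →ₗ[ℝ] V} {R : CurvTensor V} (m : ℕ)
variable (hJ : IsComplexStructure J) (hK : IsKahlerCurv J R)
include hJ hK

lemma qh_bochnerC (x : V) :
    qh (bochnerC m J R) J x
      = qh R J x - (1 / (2 * ((m : ℝ) + 2))) * (8 * ⟪x, x⟫ * ricciT R x x)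
        + (scalarT R / (4 * ((m : ℝ) + 1) * ((m : ℝ) + 2)) / 2) * (8 * ⟪x, x⟫ * ⟪x, x⟫) := by
  show bochnerT m J R x (J x) (J x) x = _
  rw [bochner_eq,
    phi_diag hJ (ricciT_symm hJ hK) (ricci_SJswap hJ hK) (ricciT_J hJ hK) x,
    phi_diag hJ (inner_Ssymm hJ hK) (inner_SJswap hJ hK) (fun a b => hJ.2 a b) x]
  rfl

end QB

section KeyStep
variable {V : Type*} [NormedAddCommGroup V] [InnerProductSpace ℝ V] [FiniteDimensional ℝ V]
variable {J : V →ₗ[ℝ] V} {m : ℕ} {R : CurvTensor V}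
variable (hJ : IsComplexStructure J) (hK : IsKahlerCurv J R)
include hJ hK

lemma rot_eq {e : Fin m → V} (he : IsAdaptedBasis J e)
    (HYP : ∀ f : Fin m → V, IsAdaptedBasis J f → ∑ l, qh R J (f l) = ∑ l, qh R J (e l))
    (i₀ i : Fin m) (hii : i₀ ≠ i) (y : V)
    (hyy : ⟪y, y⟫ = 1) (hxy : ⟪e i₀, y⟫ = 0) (hxJy : ⟪e i₀, J y⟫ = 0)
    (hyl : ∀ l, l ≠ i₀ → l ≠ i → ⟪y, e l⟫ = 0)
    (hyJl : ∀ l, l ≠ i₀ → l ≠ i → ⟪y, J (e l)⟫ = 0)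
    (hqy : qh R J y = qh R J (e i)) :
    4 * sec R (e i₀) y + 12 * sec R (e i₀) (J y)
      = 2 * qh R J (e i₀) + 2 * qh R J (e i) := by
  classical
  set x := e i₀ with hxdef
  set c : ℝ := (Real.sqrt 2)⁻¹ with hcdef
  have hc2 : c ^ 2 = 1 / 2 := by
    rw [hcdef, inv_pow, Real.sq_sqrt (by norm_num : (0:ℝ) ≤ 2)]
    norm_num
  have hxx : ⟪x, x⟫ = 1 := by rw [hxdef]; rw [he.1 i₀ i₀]; simp
  have hyx : ⟪y, x⟫ = 0 := by rw [real_inner_comm x y]; exact hxy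
  have hxJx : ⟪x, J x⟫ = 0 := ics_inner_J_self hJ x
  have hyJy : ⟪y, J y⟫ = 0 := ics_inner_J_self hJ y
  have hyJx : ⟪y, J x⟫ = 0 := by rw [g_J_anti hJ x y, hxJy]; ring
  have hsm : ∀ v w : V, ⟪c • v, c • w⟫ = c ^ 2 * ⟪v, w⟫ := by
    intro v w
    rw [real_inner_smul_left, real_inner_smul_right]
    ring
  set a := c • (x + y) with hadef
  set b := c • (x - y) with hbdef
  have haa : ⟪a, a⟫ = 1 := by
    rw [hadef, hsm]
    simp only [inner_add_left, inner_add_right]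
    rw [hxx, hxy, hyx, hyy, hc2]
    norm_num
  have hbb : ⟪b, b⟫ = 1 := by
    rw [hbdef, hsm]
    simp only [inner_sub_left, inner_sub_right]
    rw [hxx, hxy, hyx, hyy, hc2]
    norm_num
  have hab : ⟪a, b⟫ = 0 := by
    rw [hadef, hbdef, hsm]
    simp only [inner_add_left, inner_sub_right]
    rw [hxx, hxy, hyx, hyy]
    ring
  have haJb : ⟪a, J b⟫ = 0 := by
    rw [hadef, hbdef, map_smul, hsm, map_sub]
    simp only [inner_add_left, inner_sub_right]
    rw [hxJx, hxJy, hyJx, hyJy]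
    ring
  have hae : ∀ l, l ≠ i₀ → l ≠ i → ⟪a, e l⟫ = 0 := by
    intro l h0 h1
    rw [hadef, real_inner_smul_left, inner_add_left]
    have e1 : ⟪x, e l⟫ = 0 := by
      rw [hxdef, he.1 i₀ l, if_neg (fun h => h0 h.symm)]
    rw [e1, hyl l h0 h1]
    ring
  have haJe : ∀ l, l ≠ i₀ → l ≠ i → ⟪a, J (e l)⟫ = 0 := by
    intro l h0 h1
    rw [hadef, real_inner_smul_left, inner_add_left, he.2 i₀ l, hyJl l h0 h1]
    ring
  have hbe : ∀ l, l ≠ i₀ → l ≠ i → ⟪b, e l⟫ = 0 := by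
    intro l h0 h1
    rw [hbdef, real_inner_smul_left, inner_sub_left]
    have e1 : ⟪x, e l⟫ = 0 := by
      rw [hxdef, he.1 i₀ l, if_neg (fun h => h0 h.symm)]
    rw [e1, hyl l h0 h1]
    ring
  have hbJe : ∀ l, l ≠ i₀ → l ≠ i → ⟪b, J (e l)⟫ = 0 := by
    intro l h0 h1
    rw [hbdef, real_inner_smul_left, inner_sub_left, he.2 i₀ l, hyJl l h0 h1]
    ring
  have hAd : IsAdaptedBasis J (Function.update (Function.update e i₀ a) i b) :=
    update₂_adapted hJ he i₀ i hii a b haa hbb hab haJb hae haJe hbe hbJe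
  have hsum := HYP _ hAd
  have hpt : ∀ l, qh R J (Function.update (Function.update e i₀ a) i b l)
      = Function.update (Function.update (fun l => qh R J (e l)) i₀ (qh R J a)) i
          (qh R J b) l := by
    intro l
    simp only [Function.update_apply]
    split_ifs <;> rfl
  rw [Finset.sum_congr rfl (fun l _ => hpt l),
    sum_update₂ (fun l => qh R J (e l)) i₀ i hii] at hsum
  have hq : qh R J a + qh R J b = qh R J x + qh R J (e i) := by
    rw [hxdef]
    linarith
  have hqa : qh R J a = c ^ 4 * qh R J (x + y) := qh_smul hJ hK c (x + y)
  have hqb : qh R J b = c ^ 4 * qh R J (x - y) := qh_smul hJ hK c (x - y)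
  have hc4 : c ^ 4 = 1 / 4 := by
    have : c ^ 4 = (c ^ 2) ^ 2 := by ring
    rw [this, hc2]
    norm_num
  have hm := master hJ hK x y
  rw [hc4] at hqa hqb
  linarith

lemma key_pair {e : Fin m → V} (he : IsAdaptedBasis J e)
    (HYP : ∀ f : Fin m → V, IsAdaptedBasis J f → ∑ l, qh R J (f l) = ∑ l, qh R J (e l))
    (i₀ i : Fin m) (hii : i₀ ≠ i) :
    4 * (sec R (e i₀) (e i) + sec R (e i₀) (J (e i)))
      = qh R J (e i₀) + qh R J (e i) := by
  have hii' : i ≠ i₀ := Ne.symm hii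
  have hxei : ⟪e i₀, e i⟫ = 0 := by rw [he.1 i₀ i, if_neg hii]
  have E1 : 4 * sec R (e i₀) (e i) + 12 * sec R (e i₀) (J (e i))
      = 2 * qh R J (e i₀) + 2 * qh R J (e i) := by
    refine rot_eq hJ hK he HYP i₀ i hii (e i) ?_ hxei (he.2 i₀ i) ?_ ?_ rfl
    · rw [he.1 i i]; simp
    · intro l h0 h1
      rw [he.1 i l, if_neg (fun h => h1 h.symm)]
    · intro l h0 h1
      exact he.2 i l
  have E2 : 4 * sec R (e i₀) (J (e i)) + 12 * sec R (e i₀) (e i)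
      = 2 * qh R J (e i₀) + 2 * qh R J (e i) := by
    have h := rot_eq hJ hK he HYP i₀ i hii (J (e i)) ?_ (he.2 i₀ i) ?_ ?_ ?_ ?_
    · rw [hJ.1 (e i)] at h
      have hneg : sec R (e i₀) (-(e i)) = sec R (e i₀) (e i) := sec_negr hJ hK _ _
      rw [hneg] at h
      linarith
    · rw [hJ.2 (e i) (e i), he.1 i i]; simp
    · rw [hJ.1 (e i), inner_neg_right, hxei]; ring
    · intro l h0 h1
      rw [ics_inner_J_left hJ (e i) (e l), he.2 i l]; ring
    · intro l h0 h1
      rw [hJ.2 (e i) (e l), he.1 i l, if_neg (fun h => h1 h.symm)]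
    · exact qh_J hJ hK (e i)
  linarith

end KeyStep

section KeyMain
variable {V : Type*} [NormedAddCommGroup V] [InnerProductSpace ℝ V] [FiniteDimensional ℝ V]
variable {J : V →ₗ[ℝ] V} {m : ℕ} {R : CurvTensor V}
variable (hdim : Module.finrank ℝ V = 2 * m)
variable (hJ : IsComplexStructure J) (hK : IsKahlerCurv J R)
include hdim hJ hK

/-- For a unit vector in an adapted basis: `4 S(x,x) = (m+2) Q(x) + C`. -/
lemma key_S {e : Fin m → V} (he : IsAdaptedBasis J e)
    (HYP : ∀ f : Fin m → V, IsAdaptedBasis J f → ∑ l, qh R J (f l) = ∑ l, qh R J (e l))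
    (i₀ : Fin m) :
    4 * ricciT R (e i₀) (e i₀)
      = ((m : ℝ) + 2) * qh R J (e i₀) + ∑ l, qh R J (e l) := by
  classical
  set x := e i₀ with hxdef
  have hric : ricciT R x x = ∑ l, (sec R x (e l) + sec R x (J (e l))) := by
    rw [ricciT_adapted hdim hJ hK he x x]
    refine Finset.sum_congr rfl fun l _ => ?_
    unfold sec
    rw [pair_swap hJ hK (e l) x x (e l), pair_swap hJ hK (J (e l)) x x (J (e l))]
  set g : Fin m → ℝ := fun l => sec R x (e l) + sec R x (J (e l)) with hgdef
  have hsplit : ∑ l, g l = g i₀ + ∑ l ∈ Finset.univ \ {i₀}, g l :=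
    Finset.sum_eq_add_sum_sdiff_singleton_of_mem (Finset.mem_univ i₀) g
  have hgi₀ : g i₀ = qh R J x := by
    have h0 : sec R x x = 0 := by
      have := hK.skew₁ x x x x
      unfold sec
      linarith
    show sec R x (e i₀) + sec R x (J (e i₀)) = qh R J x
    rw [← hxdef, h0]
    show 0 + sec R x (J x) = qh R J x
    rw [zero_add]
    rfl
  have hrest : ∀ l ∈ Finset.univ \ {i₀}, 4 * g l = qh R J x + qh R J (e l) := by
    intro l hl
    have hli₀ : i₀ ≠ l := fun h => by simp [← h] at hl
    have hkp := key_pair hJ hK he HYP i₀ l hli₀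
    show 4 * (sec R x (e l) + sec R x (J (e l))) = qh R J x + qh R J (e l)
    rw [hxdef]
    exact hkp
  have h4 : 4 * ∑ l ∈ Finset.univ \ {i₀}, g l
      = ∑ l ∈ Finset.univ \ {i₀}, (qh R J x + qh R J (e l)) := by
    rw [Finset.mul_sum]
    exact Finset.sum_congr rfl hrest
  have hconstsum : ∑ l ∈ Finset.univ \ {i₀}, (qh R J x + qh R J (e l))
      = (∑ l ∈ Finset.univ \ {i₀}, qh R J x) + (∑ l ∈ Finset.univ \ {i₀}, qh R J (e l)) :=
    Finset.sum_add_distrib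
  have hcx : ∑ l ∈ Finset.univ \ {i₀}, qh R J x = (m : ℝ) * qh R J x - qh R J x := by
    have h := Finset.sum_eq_add_sum_sdiff_singleton_of_mem (Finset.mem_univ i₀)
      (fun _ : Fin m => qh R J x)
    have hc : ∑ _l : Fin m, qh R J x = (m : ℝ) * qh R J x := by
      rw [Finset.sum_const, Finset.card_univ, Fintype.card_fin, nsmul_eq_mul]
    beta_reduce at h
    linarith
  have hce : ∑ l ∈ Finset.univ \ {i₀}, qh R J (e l)
      = (∑ l, qh R J (e l)) - qh R J x := by
    have h := Finset.sum_eq_add_sum_sdiff_singleton_of_mem (Finset.mem_univ i₀)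
      (fun l : Fin m => qh R J (e l))
    beta_reduce at h
    rw [← hxdef] at h
    linarith
  linarith [hric, hsplit, hgi₀, h4, hconstsum, hcx, hce]

/-- `τ = (m+1) C`. -/
lemma key_scalar {e : Fin m → V} (he : IsAdaptedBasis J e)
    (HYP : ∀ f : Fin m → V, IsAdaptedBasis J f → ∑ l, qh R J (f l) = ∑ l, qh R J (e l)) :
    scalarT R = ((m : ℝ) + 1) * ∑ l, qh R J (e l) := by
  have hsc := scalarT_adapted hdim hJ hK he
  have hsum : ∑ i, 4 * ricciT R (e i) (e i)
      = ∑ i, (((m : ℝ) + 2) * qh R J (e i) + ∑ l, qh R J (e l)) :=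
    Finset.sum_congr rfl fun i _ => key_S hdim hJ hK he HYP i
  rw [← Finset.mul_sum, Finset.sum_add_distrib, ← Finset.mul_sum, Finset.sum_const,
    Finset.card_univ, Fintype.card_fin, nsmul_eq_mul] at hsum
  linarith

end KeyMain

section Final
variable {V : Type*} [NormedAddCommGroup V] [InnerProductSpace ℝ V] [FiniteDimensional ℝ V]
variable {J : V →ₗ[ℝ] V} {m : ℕ} {R : CurvTensor V}
variable (hdim : Module.finrank ℝ V = 2 * m)
variable (hJ : IsComplexStructure J) (hK : IsKahlerCurv J R)
include hdim hJ hK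

lemma key_unit (hm : 1 ≤ m) {e₀ : Fin m → V} (he₀ : IsAdaptedBasis J e₀)
    (HYP : ∀ e f : Fin m → V, IsAdaptedBasis J e → IsAdaptedBasis J f →
      ∑ l, qh R J (e l) = ∑ l, qh R J (f l))
    (u : V) (hu : ⟪u, u⟫ = 1) :
    4 * ricciT R u u = ((m : ℝ) + 2) * qh R J u + ∑ l, qh R J (e₀ l) := by
  obtain ⟨f, hf, hfi⟩ := adapted_extend hdim hJ (m - 1) 1 (by omega) (fun _ => u)
    (fun i j => by rw [Subsingleton.elim i j, if_pos rfl]; exact hu)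
    (fun i j => ics_inner_J_self hJ u)
  have hfu : f ⟨0, by omega⟩ = u := hfi ⟨0, by omega⟩
  have hkey := key_S hdim hJ hK hf (fun g hg => HYP g f hg hf) ⟨0, by omega⟩
  rw [hfu] at hkey
  rw [hkey, HYP f e₀ hf he₀]

lemma key_allx (hm : 1 ≤ m) {e₀ : Fin m → V} (he₀ : IsAdaptedBasis J e₀)
    (HYP : ∀ e f : Fin m → V, IsAdaptedBasis J e → IsAdaptedBasis J f →
      ∑ l, qh R J (e l) = ∑ l, qh R J (f l)) (x : V) :
    ((m : ℝ) + 2) * qh R J x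
      = 4 * ⟪x, x⟫ * ricciT R x x - (∑ l, qh R J (e₀ l)) * ⟪x, x⟫ ^ 2 := by
  by_cases hx0 : x = 0
  · subst hx0
    have h1 : qh R J (0 : V) = 0 := by unfold qh; simp
    have h2 : (⟪(0 : V), (0 : V)⟫ : ℝ) = 0 := inner_zero_left 0
    rw [h1, h2]
    ring
  · have hn : ‖x‖ ≠ 0 := norm_ne_zero_iff.mpr hx0
    set u := (‖x‖⁻¹ : ℝ) • x with hudef
    have hxu : ‖x‖ • u = x := by
      rw [hudef, smul_smul, mul_inv_cancel₀ hn, one_smul]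
    have hu : ⟪u, u⟫ = 1 := by
      rw [hudef, real_inner_smul_left, real_inner_smul_right, real_inner_self_eq_norm_sq]
      field_simp
    have hkey := key_unit hdim hJ hK hm he₀ HYP u hu
    have hq : qh R J x = ‖x‖ ^ 4 * qh R J u := by
      have h := qh_smul hJ hK ‖x‖ u
      rw [hxu] at h
      exact h
    have hr : ricciT R x x = ‖x‖ ^ 2 * ricciT R u u := by
      have h : ricciT R (‖x‖ • u) (‖x‖ • u) = ‖x‖ ^ 2 * ricciT R u u := by
        rw [ricciT_smul_left, ricciT_smul_right]
        ring
      rw [hxu] at h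
      exact h
    have hg : (⟪x, x⟫ : ℝ) = ‖x‖ ^ 2 := real_inner_self_eq_norm_sq x
    rw [hq, hr, hg]
    linear_combination (-‖x‖ ^ 4) * hkey

lemma key_qhB (hm : 1 ≤ m) {e₀ : Fin m → V} (he₀ : IsAdaptedBasis J e₀)
    (HYP : ∀ e f : Fin m → V, IsAdaptedBasis J e → IsAdaptedBasis J f →
      ∑ l, qh R J (e l) = ∑ l, qh R J (f l)) (x : V) :
    qh (bochnerC m J R) J x = 0 := by
  have h1 : ((m : ℝ) + 1) ≠ 0 := by positivity
  have h2 : ((m : ℝ) + 2) ≠ 0 := by positivity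
  have hτ := key_scalar hdim hJ hK he₀ (fun f hf => HYP f e₀ hf he₀)
  have hx := key_allx hdim hJ hK hm he₀ HYP x
  rw [qh_bochnerC m hJ hK x, hτ]
  field_simp
  linear_combination (8 : ℝ) * hx

/-- Forward direction: vanishing Bochner tensor determines the sums. -/
lemma sum_qh_const (hB : ∀ x y z u, bochnerT m J R x y z u = 0)
    {e : Fin m → V} (he : IsAdaptedBasis J e) :
    ((m : ℝ) + 1) * ((m : ℝ) + 2) * ∑ i, qh R J (e i)
      = ((m : ℝ) + 2) * scalarT R := by
  have h1 : ((m : ℝ) + 1) ≠ 0 := by positivity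
  have h2 : ((m : ℝ) + 2) ≠ 0 := by positivity
  have hper : ∀ i, ((m : ℝ) + 1) * ((m : ℝ) + 2) * qh R J (e i)
      = 4 * ((m : ℝ) + 1) * ricciT R (e i) (e i) - scalarT R := by
    intro i
    have hz : qh (bochnerC m J R) J (e i) = 0 := hB _ _ _ _
    have hform := qh_bochnerC m hJ hK (e i)
    rw [hz] at hform
    have hei : (⟪e i, e i⟫ : ℝ) = 1 := by rw [he.1 i i, if_pos rfl]
    rw [hei] at hform
    field_simp at hform
    have h3 : (16 : ℝ) * ((m : ℝ) + 2) ≠ 0 := by positivity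
    apply mul_left_cancel₀ h3
    linear_combination (-2 * ((m : ℝ) + 2)) * hform
  have hsum : ∑ i, (((m : ℝ) + 1) * ((m : ℝ) + 2) * qh R J (e i))
      = ∑ i, (4 * ((m : ℝ) + 1) * ricciT R (e i) (e i) - scalarT R) :=
    Finset.sum_congr rfl fun i _ => hper i
  rw [← Finset.mul_sum, Finset.sum_sub_distrib, ← Finset.mul_sum, Finset.sum_const,
    Finset.card_univ, Fintype.card_fin, nsmul_eq_mul] at hsum
  have hsc := scalarT_adapted hdim hJ hK he
  rw [hsum, hsc]
  ring

end Final

end BochnerProof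

theorem bochner_vanishes_iff_basis_independence
    {V : Type*} [NormedAddCommGroup V] [InnerProductSpace ℝ V]
    [FiniteDimensional ℝ V] {P : Type*}
    (m : ℕ) (hdim : Module.finrank ℝ V = 2 * m)
    (J : V →ₗ[ℝ] V) (hJ : IsComplexStructure J)
    (R : P → CurvTensor V) (hR : ∀ p, IsKahlerCurv J (R p)) :
    (∀ p x y z u, bochnerT m J (R p) x y z u = 0) ↔
      (∀ (p : P) (e f : Fin m → V), IsAdaptedBasis J e → IsAdaptedBasis J f →
        ∑ i, R p (e i) (J (e i)) (J (e i)) (e i) =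
          ∑ i, R p (f i) (J (f i)) (J (f i)) (f i)) := by
  open BochnerProof in
  constructor
  · intro hB p e f he hf
    have h1 : ((m : ℝ) + 1) ≠ 0 := by positivity
    have h2 : ((m : ℝ) + 2) ≠ 0 := by positivity
    have hce := sum_qh_const hdim hJ (hR p) (hB p) he
    have hcf := sum_qh_const hdim hJ (hR p) (hB p) hf
    have : (∑ i, qh (R p) J (e i)) = ∑ i, qh (R p) J (f i) := by
      have hmul : ((m : ℝ) + 1) * ((m : ℝ) + 2) ≠ 0 := mul_ne_zero h1 h2
      exact mul_left_cancel₀ hmul (hce.trans hcf.symm)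
    exact this
  · intro HYP p x y z u
    rcases Nat.eq_zero_or_pos m with hm | hm
    · subst hm
      have hsub : Subsingleton V := by
        rw [mul_zero] at hdim
        exact Module.finrank_zero_iff.mp hdim
      have hx0 : x = 0 := Subsingleton.elim x 0
      subst hx0
      show bochnerC 0 J (R p) 0 y z u = 0
      rw [map_zero]
      rfl
    · obtain ⟨e₀, he₀, -⟩ := adapted_extend hdim hJ m 0 (by omega) (fun i => i.elim0)
        (fun i => i.elim0) (fun i => i.elim0)
      have HYP' : ∀ e f : Fin m → V, IsAdaptedBasis J e → IsAdaptedBasis J f →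
          ∑ l, qh (R p) J (e l) = ∑ l, qh (R p) J (f l) := fun e f he hf => HYP p e f he hf
      have hQ := key_qhB hdim hJ (hR p) hm he₀ HYP'
      have hvan := kahler_vanish hJ (bochnerC_kahlerCurv m hJ (hR p)) hQ
      exact hvan x y z u
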